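/- Let A₁,…,A_n and B₁,…,B_n be algebras with homomorphisms B_k → A_k, and let A = A₁ × ⋯ × A_n, B = B₁ × ⋯ × B_n with the product homomorphism B → A. Then A over B is depth two if and only if A_k over B_k is depth two for each k. -/

import Mathlib

open TensorProduct LinearMap

noncomputable section

variable {K : Type*} [CommRing K] {A B : Type*} [Ring A] [Ring B] [Algebra K A] [Algebra K B]

/-- Left multiplication by `a` on the first tensorand of `A ⊗[K] A`. -/
def lmulT (a : A) : A ⊗[K] A →ₗ[K] A ⊗[K] A := rTensor A (mulLeft K a)

/-- Right multiplication by `a` on the second tensorand of `A ⊗[K] A`. -/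
def rmulT (a : A) : A ⊗[K] A →ₗ[K] A ⊗[K] A := lTensor A (mulRight K a)

/-- The relations defining `A ⊗_B A` as a quotient of `A ⊗[K] A`; working modulo
`relJ f` amounts to working in the tensor square `A ⊗_B A` of the extension `f`. -/
def relJ (f : B →ₐ[K] A) : Submodule K (A ⊗[K] A) :=
  Submodule.span K {z | ∃ x b y, z = (x * f b) ⊗ₜ[K] y - x ⊗ₜ[K] (f b * y)}

/-- `α` is a `B`-`B`-bimodule endomorphism of `A`. -/
def IsBB (f : B →ₐ[K] A) (α : A →ₗ[K] A) : Prop :=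
  (∀ b x, α (f b * x) = f b * α x) ∧ (∀ b x, α (x * f b) = α x * f b)

/-- `t` represents a `B`-central element of `A ⊗_B A`. -/
def IsCent (f : B →ₐ[K] A) (t : A ⊗[K] A) : Prop :=
  ∀ b, lmulT (K := K) (f b) t - rmulT (f b) t ∈ relJ f

/-- `A ⊗_B A` is isomorphic, as a `B`-`A`-bimodule, to a direct summand of `A^N`
for some positive `N`: there is a split mono `ι` (with splitting `π`), both maps
being `B`-`A`-bimodule maps (everything taken modulo the relations `relJ f`). -/
def LeftD2 (f : B →ₐ[K] A) : Prop :=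
  ∃ N : ℕ, 0 < N ∧ ∃ (ι : A ⊗[K] A →ₗ[K] (Fin N → A)) (π : (Fin N → A) →ₗ[K] A ⊗[K] A),
    (∀ z ∈ relJ f, ι z = 0) ∧
    (∀ b z, ι (lmulT (f b) z) = fun i => f b * ι z i) ∧
    (∀ a z, ι (rmulT a z) = fun i => ι z i * a) ∧
    (∀ b (v : Fin N → A), π (fun i => f b * v i) - lmulT (f b) (π v) ∈ relJ f) ∧
    (∀ a (v : Fin N → A), π (fun i => v i * a) - rmulT a (π v) ∈ relJ f) ∧
    (∀ z, π (ι z) - z ∈ relJ f)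

/-- `A ⊗_B A` is isomorphic, as an `A`-`B`-bimodule, to a direct summand of `A^N`. -/
def RightD2 (f : B →ₐ[K] A) : Prop :=
  ∃ N : ℕ, 0 < N ∧ ∃ (ι : A ⊗[K] A →ₗ[K] (Fin N → A)) (π : (Fin N → A) →ₗ[K] A ⊗[K] A),
    (∀ z ∈ relJ f, ι z = 0) ∧
    (∀ a z, ι (lmulT a z) = fun i => a * ι z i) ∧
    (∀ b z, ι (rmulT (f b) z) = fun i => ι z i * f b) ∧
    (∀ a (v : Fin N → A), π (fun i => a * v i) - lmulT a (π v) ∈ relJ f) ∧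
    (∀ b (v : Fin N → A), π (fun i => v i * f b) - rmulT (f b) (π v) ∈ relJ f) ∧
    (∀ z, π (ι z) - z ∈ relJ f)

/-- `A ⊗_B A` is isomorphic, as an `A`-`A`-bimodule, to a direct summand of `A^N`:
H-separability of the extension `f`. -/
def HSep (f : B →ₐ[K] A) : Prop :=
  ∃ N : ℕ, 0 < N ∧ ∃ (ι : A ⊗[K] A →ₗ[K] (Fin N → A)) (π : (Fin N → A) →ₗ[K] A ⊗[K] A),
    (∀ z ∈ relJ f, ι z = 0) ∧
    (∀ a z, ι (lmulT a z) = fun i => a * ι z i) ∧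
    (∀ a z, ι (rmulT a z) = fun i => ι z i * a) ∧
    (∀ a (v : Fin N → A), π (fun i => a * v i) - lmulT a (π v) ∈ relJ f) ∧
    (∀ a (v : Fin N → A), π (fun i => v i * a) - rmulT a (π v) ∈ relJ f) ∧
    (∀ z, π (ι z) - z ∈ relJ f)


/-! ### Auxiliary machinery for `d2_pi_iff` -/

section D2Aux

/-- A common generalization of `LeftD2`, `RightD2` (and `HSep`), where the one-sided
module conditions are required only for multipliers in prescribed sets `SL`, `SR`. -/
def D2Prop (f : B →ₐ[K] A) (SL SR : Set A) : Prop :=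
  ∃ N : ℕ, 0 < N ∧ ∃ (ι : A ⊗[K] A →ₗ[K] (Fin N → A)) (π : (Fin N → A) →ₗ[K] A ⊗[K] A),
    (∀ z ∈ relJ f, ι z = 0) ∧
    (∀ a ∈ SL, ∀ z, ι (lmulT a z) = fun i => a * ι z i) ∧
    (∀ a ∈ SR, ∀ z, ι (rmulT a z) = fun i => ι z i * a) ∧
    (∀ a ∈ SL, ∀ v : Fin N → A, π (fun i => a * v i) - lmulT a (π v) ∈ relJ f) ∧
    (∀ a ∈ SR, ∀ v : Fin N → A, π (fun i => v i * a) - rmulT a (π v) ∈ relJ f) ∧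
    (∀ z, π (ι z) - z ∈ relJ f)

lemma leftD2_iff_d2prop (g : B →ₐ[K] A) : LeftD2 g ↔ D2Prop g (Set.range g) Set.univ := by
  constructor
  · rintro ⟨N, hN, i, p, h0, h1, h2, h3, h4, h5⟩
    refine ⟨N, hN, i, p, h0, ?_, fun a _ z => h2 a z, ?_, fun a _ v => h4 a v, h5⟩
    · rintro _ ⟨b, rfl⟩ z; exact h1 b z
    · rintro _ ⟨b, rfl⟩ v; exact h3 b v
  · rintro ⟨N, hN, i, p, h0, h1, h2, h3, h4, h5⟩
    exact ⟨N, hN, i, p, h0, fun b z => h1 _ ⟨b, rfl⟩ z, fun a z => h2 a (Set.mem_univ a) z,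
      fun b v => h3 _ ⟨b, rfl⟩ v, fun a v => h4 a (Set.mem_univ a) v, h5⟩

lemma rightD2_iff_d2prop (g : B →ₐ[K] A) : RightD2 g ↔ D2Prop g Set.univ (Set.range g) := by
  constructor
  · rintro ⟨N, hN, i, p, h0, h1, h2, h3, h4, h5⟩
    refine ⟨N, hN, i, p, h0, fun a _ z => h1 a z, ?_, fun a _ v => h3 a v, ?_, h5⟩
    · rintro _ ⟨b, rfl⟩ z; exact h2 b z
    · rintro _ ⟨b, rfl⟩ v; exact h4 b v
  · rintro ⟨N, hN, i, p, h0, h1, h2, h3, h4, h5⟩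
    exact ⟨N, hN, i, p, h0, fun a z => h1 a (Set.mem_univ a) z, fun b z => h2 _ ⟨b, rfl⟩ z,
      fun a v => h3 a (Set.mem_univ a) v, fun b v => h4 _ ⟨b, rfl⟩ v, h5⟩

variable {A' B' : Type*} [Ring A'] [Ring B'] [Algebra K A'] [Algebra K B']

lemma map_lmulT (g : A →ₗ[K] A') {a : A} {a' : A'} (h : ∀ x, g (a * x) = a' * g x)
    (z : A ⊗[K] A) :
    TensorProduct.map g g (lmulT a z) = lmulT a' (TensorProduct.map g g z) := by
  induction z using TensorProduct.induction_on with
  | zero => simp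
  | tmul x y => simp [lmulT, h]
  | add u v hu hv => simp [hu, hv]

lemma map_rmulT (g : A →ₗ[K] A') {a : A} {a' : A'} (h : ∀ x, g (x * a) = g x * a')
    (z : A ⊗[K] A) :
    TensorProduct.map g g (rmulT a z) = rmulT a' (TensorProduct.map g g z) := by
  induction z using TensorProduct.induction_on with
  | zero => simp
  | tmul x y => simp [rmulT, h]
  | add u v hu hv => simp [hu, hv]

lemma lmulT_one (z : A ⊗[K] A) : lmulT (1 : A) z = z := by
  simp [lmulT, LinearMap.mulLeft_one]

lemma map_relJ (g : A →ₗ[K] A') (hg : ∀ x y, g (x * y) = g x * g y)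
    {fB : B →ₐ[K] A} {fB' : B' →ₐ[K] A'} (hb : ∀ b, ∃ b', g (fB b) = fB' b')
    {z : A ⊗[K] A} (hz : z ∈ relJ fB) : TensorProduct.map g g z ∈ relJ fB' := by
  induction hz using Submodule.span_induction with
  | mem w hw =>
    obtain ⟨x, b, y, rfl⟩ := hw
    obtain ⟨b', hb'⟩ := hb b
    exact Submodule.subset_span ⟨g x, b', g y, by simp [hg, hb']⟩
  | zero => simp only [map_zero]; exact zero_mem _
  | add x y hx hy ihx ihy => rw [map_add]; exact add_mem ihx ihy
  | smul c x hx ih => rw [map_smul]; exact Submodule.smul_mem _ _ ih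

end D2Aux


section PiAux
set_option linter.unusedSectionVars false

variable {κ : Type*} [Fintype κ] [DecidableEq κ]
  {Af Bf : κ → Type*} [∀ i, Ring (Af i)] [∀ i, Ring (Bf i)]
  [∀ i, Algebra K (Af i)] [∀ i, Algebra K (Bf i)]
  (f : ∀ i, Bf i →ₐ[K] Af i)

/-- The product extension. -/
def piF : (∀ i, Bf i) →ₐ[K] ∀ i, Af i :=
  Pi.algHom K Af (fun i => (f i).comp (Pi.evalAlgHom K Bf i))

lemma piF_apply (b : ∀ i, Bf i) (i : κ) : piF f b i = f i (b i) := rfl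

lemma piF_single (i : κ) (b : Bf i) : piF f (Pi.single i b) = Pi.single i (f i b) := by
  funext j
  by_cases h : j = i
  · subst h; simp [piF_apply]
  · simp [piF_apply, Pi.single_eq_of_ne h]

lemma mul_single' (a : ∀ j, Af j) (i : κ) (x : Af i) :
    a * Pi.single i x = Pi.single i (a i * x) := by
  funext j
  by_cases h : j = i
  · subst h; simp
  · simp [Pi.single_eq_of_ne h]

lemma single_mul'' (i : κ) (x : Af i) (a : ∀ j, Af j) :
    Pi.single i x * a = Pi.single i (x * a i) := by
  funext j
  by_cases h : j = i
  · subst h; simp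
  · simp [Pi.single_eq_of_ne h]

/-- Projection of the tensor square of the product onto a component tensor square. -/
def Pmap (i : κ) : ((∀ j, Af j) ⊗[K] (∀ j, Af j)) →ₗ[K] Af i ⊗[K] Af i :=
  TensorProduct.map (LinearMap.proj i) (LinearMap.proj i)

/-- Inclusion of a component tensor square into the tensor square of the product. -/
def Smap (i : κ) : (Af i ⊗[K] Af i) →ₗ[K] ((∀ j, Af j) ⊗[K] (∀ j, Af j)) :=
  TensorProduct.map (LinearMap.single K Af i) (LinearMap.single K Af i)

lemma Pmap_relJ (i : κ) {z} (hz : z ∈ relJ (piF f)) : Pmap (Af := Af) i z ∈ relJ (f i) :=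
  map_relJ _ (fun _ _ => rfl) (fun b => ⟨b i, rfl⟩) hz

lemma Smap_relJ (i : κ) {z} (hz : z ∈ relJ (f i)) : Smap (Af := Af) i z ∈ relJ (piF f) :=
  map_relJ _ (fun x y => Pi.single_mul i x y)
    (fun b => ⟨Pi.single i b, by rw [LinearMap.single_apply, piF_single]⟩) hz

lemma Pmap_lmulT (i : κ) (a : ∀ j, Af j) (z) :
    Pmap (Af := Af) (K := K) i (lmulT a z) = lmulT (a i) (Pmap i z) :=
  map_lmulT _ (fun _ => rfl) z

lemma Pmap_rmulT (i : κ) (a : ∀ j, Af j) (z) :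
    Pmap (Af := Af) (K := K) i (rmulT a z) = rmulT (a i) (Pmap i z) :=
  map_rmulT _ (fun _ => rfl) z

lemma Smap_lmulT (i : κ) (x : Af i) (z) :
    Smap (Af := Af) (K := K) i (lmulT x z) = lmulT (Pi.single i x) (Smap i z) :=
  map_lmulT _ (fun y => by rw [LinearMap.single_apply, LinearMap.single_apply,
    Pi.single_mul]) z

lemma Smap_rmulT (i : κ) (x : Af i) (z) :
    Smap (Af := Af) (K := K) i (rmulT x z) = rmulT (Pi.single i x) (Smap i z) :=
  map_rmulT _ (fun y => by rw [LinearMap.single_apply, LinearMap.single_apply,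
    Pi.single_mul]) z

lemma Smap_lmulT' (i : κ) (a : ∀ j, Af j) (z) :
    Smap (Af := Af) (K := K) i (lmulT (a i) z) = lmulT a (Smap i z) :=
  map_lmulT _ (fun x => by rw [LinearMap.single_apply, LinearMap.single_apply,
    mul_single']) z

lemma Smap_rmulT' (i : κ) (a : ∀ j, Af j) (z) :
    Smap (Af := Af) (K := K) i (rmulT (a i) z) = rmulT a (Smap i z) :=
  map_rmulT _ (fun x => by rw [LinearMap.single_apply, LinearMap.single_apply,
    single_mul'']) z

lemma Pmap_Smap (i : κ) (z : Af i ⊗[K] Af i) : Pmap (Af := Af) i (Smap i z) = z := by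
  induction z using TensorProduct.induction_on with
  | zero => simp
  | tmul x y => simp [Pmap, Smap]
  | add u v hu hv => simp [hu, hv]

lemma single_tmul_single_mem (i j : κ) (hij : j ≠ i) (x : Af i) (y : Af j) :
    (Pi.single i x ⊗ₜ[K] Pi.single j y : (∀ j, Af j) ⊗[K] (∀ j, Af j)) ∈ relJ (piF f) := by
  apply Submodule.subset_span
  refine ⟨Pi.single i x, Pi.single i (1 : Bf i), Pi.single j y, ?_⟩
  rw [piF_single, map_one, single_mul'', Pi.single_eq_same, mul_one,
    mul_single' (Pi.single i (1 : Af i)) j y, Pi.single_eq_of_ne hij, zero_mul,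
    Pi.single_zero, tmul_zero, sub_zero]

lemma sub_sum_Smap_Pmap_mem (z : (∀ j, Af j) ⊗[K] (∀ j, Af j)) :
    z - ∑ i, Smap (Af := Af) i (Pmap i z) ∈ relJ (piF f) := by
  induction z using TensorProduct.induction_on with
  | zero => simp only [map_zero, Finset.sum_const_zero, sub_zero]; exact zero_mem _
  | add u v hu hv =>
    have e : (u + v) - ∑ i, Smap (Af := Af) i (Pmap i (u + v)) =
        (u - ∑ i, Smap (Af := Af) i (Pmap i u)) +
        (v - ∑ i, Smap (Af := Af) i (Pmap i v)) := by
      simp only [map_add, Finset.sum_add_distrib]; abel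
    rw [e]; exact add_mem hu hv
  | tmul x y =>
    have hSP : ∀ i : κ, Smap (Af := Af) (K := K) i (Pmap i (x ⊗ₜ[K] y)) =
        Pi.single i (x i) ⊗ₜ[K] Pi.single i (y i) := by
      intro i; simp [Pmap, Smap]
    have hxy : x ⊗ₜ[K] y =
        ∑ i, ∑ j, (Pi.single i (x i) ⊗ₜ[K] Pi.single j (y j) :
          (∀ j, Af j) ⊗[K] (∀ j, Af j)) := by
      conv_lhs => rw [← Finset.univ_sum_single x, ← Finset.univ_sum_single y]
      rw [sum_tmul]
      exact Finset.sum_congr rfl fun i _ => tmul_sum _ _ _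
    simp only [hSP]
    rw [hxy, ← Finset.sum_sub_distrib]
    refine Submodule.sum_mem _ fun i _ => ?_
    rw [← Finset.sum_erase_add Finset.univ _ (Finset.mem_univ i), add_sub_cancel_right]
    exact Submodule.sum_mem _ fun j hj =>
      single_tmul_single_mem f i j (Finset.ne_of_mem_erase hj) (x i) (y j)

lemma d2prop_component {SL SR : Set (∀ j, Af j)} (i : κ) {SLi SRi : Set (Af i)}
    (hL : ∀ x ∈ SLi, Pi.single i x ∈ SL) (hR : ∀ x ∈ SRi, Pi.single i x ∈ SR)
    (h1 : Pi.single i (1 : Af i) ∈ SL)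
    (h : D2Prop (piF f) SL SR) : D2Prop (f i) SLi SRi := by
  obtain ⟨N, hN, ι, π, k0, k1, k2, k3, k4, k5⟩ := h
  refine ⟨N, hN,
    (LinearMap.compLeft (LinearMap.proj i) (Fin N)).comp (ι.comp (Smap (K := K) i)),
    (Pmap (K := K) i).comp (π.comp (LinearMap.compLeft (LinearMap.single K Af i) (Fin N))),
    ?_, ?_, ?_, ?_, ?_, ?_⟩
  · intro z hz
    simp only [LinearMap.comp_apply, k0 _ (Smap_relJ f i hz), map_zero]
  · intro x hx w
    simp only [LinearMap.comp_apply, Smap_lmulT, k1 _ (hL x hx)]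
    funext k
    simp [LinearMap.compLeft_apply]
  · intro x hx w
    simp only [LinearMap.comp_apply, Smap_rmulT, k2 _ (hR x hx)]
    funext k
    simp [LinearMap.compLeft_apply]
  · intro x hx v
    have h' := Pmap_relJ f i (k3 _ (hL x hx) (fun k => LinearMap.single K Af i (v k)))
    simp only [map_sub, Pmap_lmulT, Pi.single_eq_same] at h'
    have e : (fun k => Pi.single i x * LinearMap.single K Af i (v k)) =
        fun k => (LinearMap.single K Af i) (x * v k) := by
      funext k; rw [LinearMap.single_apply, LinearMap.single_apply, Pi.single_mul]
    rw [e] at h'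
    exact h'
  · intro x hx v
    have h' := Pmap_relJ f i (k4 _ (hR x hx) (fun k => LinearMap.single K Af i (v k)))
    simp only [map_sub, Pmap_rmulT, Pi.single_eq_same] at h'
    have e : (fun k => LinearMap.single K Af i (v k) * Pi.single i x) =
        fun k => (LinearMap.single K Af i) (v k * x) := by
      funext k; rw [LinearMap.single_apply, LinearMap.single_apply, Pi.single_mul]
    rw [e] at h'
    exact h'
  · intro w
    have key : ∀ u : ∀ j, Af j, Pi.single i (u i) = Pi.single i (1 : Af i) * u := by
      intro u; funext j
      by_cases hj : j = i
      · subst hj; simp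
      · simp [Pi.single_eq_of_ne hj]
    have e2 : (fun k => Pi.single i (1 : Af i) * ι (Smap (K := K) i w) k) =
        ι (Smap (K := K) i w) := by
      rw [← k1 _ h1 (Smap (K := K) i w), ← Smap_lmulT, lmulT_one]
    have e12 : ((LinearMap.single K Af i).compLeft (Fin N))
        (((LinearMap.proj (R := K) (φ := Af) i).compLeft (Fin N)) (ι (Smap (K := K) i w))) =
        ι (Smap (K := K) i w) := by
      funext k
      have h2 := congrFun e2 k
      simpa [LinearMap.compLeft_apply, key] using h2
    have h' := Pmap_relJ f i (k5 (Smap (K := K) i w))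
    simp only [map_sub, Pmap_Smap] at h'
    simpa [e12] using h'

lemma d2prop_pi {SL SR : Set (∀ j, Af j)} {SL' SR' : ∀ i, Set (Af i)}
    (hL : ∀ a ∈ SL, ∀ i, a i ∈ SL' i) (hR : ∀ a ∈ SR, ∀ i, a i ∈ SR' i)
    (h : ∀ i, D2Prop (f i) (SL' i) (SR' i)) : D2Prop (piF f) SL SR := by
  choose N hN ι' π' k0 k1 k2 k3 k4 k5 using h
  set κ' := (Σ i : κ, Fin (N i)) with hκ'
  let e : κ' ≃ Fin (Fintype.card κ') := Fintype.equivFin κ'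
  set M := Fintype.card κ' + 1 with hM
  let ιc : ((∀ j, Af j) ⊗[K] (∀ j, Af j)) →ₗ[K] (κ' → ∀ j, Af j) :=
    LinearMap.pi fun c =>
      (LinearMap.single K Af c.1).comp ((LinearMap.proj c.2).comp ((ι' c.1).comp (Pmap c.1)))
  let pad : (κ' → ∀ j, Af j) →ₗ[K] (Fin M → ∀ j, Af j) :=
    LinearMap.pi fun m => Fin.lastCases 0 (fun m' => LinearMap.proj (e.symm m')) m
  let unpad : (Fin M → ∀ j, Af j) →ₗ[K] (κ' → ∀ j, Af j) :=
    LinearMap.pi fun c => LinearMap.proj (Fin.castSucc (e c))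
  let πc : (κ' → ∀ j, Af j) →ₗ[K] ((∀ j, Af j) ⊗[K] (∀ j, Af j)) :=
    ∑ i, (Smap (K := K) i).comp ((π' i).comp
      (LinearMap.pi fun k => (LinearMap.proj i).comp (LinearMap.proj (⟨i, k⟩ : κ'))))
  have ιc_apply : ∀ z c, ιc z c = Pi.single c.1 (ι' c.1 (Pmap (K := K) c.1 z) c.2) :=
    fun z c => rfl
  have pad_castSucc : ∀ (v : κ' → ∀ j, Af j) (m' : Fin (Fintype.card κ')),
      pad v (Fin.castSucc m') = v (e.symm m') := by
    intro v m'
    simp [pad, LinearMap.pi_apply]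
    rw [Fin.lastCases_castSucc]; rfl
  have pad_last : ∀ v : κ' → ∀ j, Af j, pad v (Fin.last _) = 0 := by
    intro v; simp [pad, LinearMap.pi_apply]
    rw [Fin.lastCases_last]; rfl
  have unpad_apply : ∀ (w : Fin M → ∀ j, Af j) (c : κ'),
      unpad w c = w (Fin.castSucc (e c)) := fun w c => rfl
  have unpad_pad : ∀ v, unpad (pad v) = v := by
    intro v; funext c
    rw [unpad_apply, pad_castSucc, e.symm_apply_apply]
  have pad_mull : ∀ (a : ∀ j, Af j) (v : κ' → ∀ j, Af j),
      pad (fun c => a * v c) = fun m => a * pad v m := by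
    intro a v; funext m
    induction m using Fin.lastCases with
    | last => rw [pad_last, pad_last, mul_zero]
    | cast m' => rw [pad_castSucc, pad_castSucc]
  have pad_mulr : ∀ (a : ∀ j, Af j) (v : κ' → ∀ j, Af j),
      pad (fun c => v c * a) = fun m => pad v m * a := by
    intro a v; funext m
    induction m using Fin.lastCases with
    | last => rw [pad_last, pad_last, zero_mul]
    | cast m' => rw [pad_castSucc, pad_castSucc]
  have πc_apply : ∀ u : κ' → ∀ j, Af j,
      πc u = ∑ i, Smap (K := K) i (π' i (fun k => u ⟨i, k⟩ i)) := by
    intro u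
    simp only [πc, LinearMap.sum_apply, LinearMap.comp_apply]
    exact Finset.sum_congr rfl fun i _ => rfl
  refine ⟨M, Nat.succ_pos _, pad.comp ιc, πc.comp unpad, ?_, ?_, ?_, ?_, ?_, ?_⟩
  · intro z hz
    have : ιc z = 0 := by
      funext c
      rw [ιc_apply, k0 c.1 _ (Pmap_relJ f c.1 hz)]
      simp
    simp [this]
  · intro a ha z
    have e1 : ιc (lmulT a z) = fun c => a * ιc z c := by
      funext c
      rw [ιc_apply, ιc_apply, Pmap_lmulT, k1 c.1 _ (hL a ha c.1), mul_single']
    simp only [LinearMap.comp_apply, e1, pad_mull]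
  · intro a ha z
    have e1 : ιc (rmulT a z) = fun c => ιc z c * a := by
      funext c
      rw [ιc_apply, ιc_apply, Pmap_rmulT, k2 c.1 _ (hR a ha c.1), single_mul'']
    simp only [LinearMap.comp_apply, e1, pad_mulr]
  · intro a ha v
    have e1 : unpad (fun m => a * v m) = fun c => a * unpad v c := rfl
    simp only [LinearMap.comp_apply, e1, πc_apply]
    rw [map_sum (lmulT a), ← Finset.sum_sub_distrib]
    refine Submodule.sum_mem _ fun i _ => ?_
    have h' := Smap_relJ f i (k3 i _ (hL a ha i) (fun k => unpad v ⟨i, k⟩ i))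
    rw [map_sub, Smap_lmulT'] at h'
    exact h'
  · intro a ha v
    have e1 : unpad (fun m => v m * a) = fun c => unpad v c * a := rfl
    simp only [LinearMap.comp_apply, e1, πc_apply]
    rw [map_sum (rmulT a), ← Finset.sum_sub_distrib]
    refine Submodule.sum_mem _ fun i _ => ?_
    have h' := Smap_relJ f i (k4 i _ (hR a ha i) (fun k => unpad v ⟨i, k⟩ i))
    rw [map_sub, Smap_rmulT'] at h'
    exact h'
  · intro z
    simp only [LinearMap.comp_apply, unpad_pad, πc_apply]
    have e1 : ∀ i, (fun k => ιc z ⟨i, k⟩ i) = ι' i (Pmap (K := K) i z) := by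
      intro i; funext k
      rw [ιc_apply]; simp
    have h1' : (∑ i, Smap (K := K) i (π' i (fun k => ιc z ⟨i, k⟩ i))) -
        (∑ i, Smap (K := K) i (Pmap i z)) ∈ relJ (piF f) := by
      rw [← Finset.sum_sub_distrib]
      refine Submodule.sum_mem _ fun i _ => ?_
      rw [e1]
      have h' := Smap_relJ f i (k5 i (Pmap (K := K) i z))
      rwa [map_sub] at h'
    have h2' := sub_sum_Smap_Pmap_mem f z
    have h3 := add_mem h1' (neg_mem h2')
    convert h3 using 1
    abel

end PiAux


/-- for a finite family of algebra extensions `B_k → A_k`, the product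
extension `Π B_k → Π A_k` is depth two iff each `A_k | B_k` is depth two. -/
theorem d2_pi_iff {ι : Type*} [Fintype ι]
    (Af Bf : ι → Type*) [∀ i, Ring (Af i)] [∀ i, Ring (Bf i)]
    [∀ i, Algebra K (Af i)] [∀ i, Algebra K (Bf i)]
    (f : ∀ i, Bf i →ₐ[K] Af i) :
    (LeftD2 (Pi.algHom K Af (fun i => (f i).comp (Pi.evalAlgHom K Bf i))) ∧
      RightD2 (Pi.algHom K Af (fun i => (f i).comp (Pi.evalAlgHom K Bf i)))) ↔
    ∀ i, LeftD2 (f i) ∧ RightD2 (f i) := by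
  classical
  constructor
  · rintro ⟨hLf, hRf⟩ i
    refine ⟨?_, ?_⟩
    · rw [leftD2_iff_d2prop] at hLf ⊢
      refine d2prop_component f i ?_ ?_ ?_ hLf
      · rintro _ ⟨b, rfl⟩
        exact ⟨Pi.single i b, piF_single f i b⟩
      · exact fun x _ => Set.mem_univ _
      · refine ⟨Pi.single i 1, ?_⟩
        have h1' := piF_single f i (1 : Bf i)
        rw [map_one] at h1'
        exact h1'
    · rw [rightD2_iff_d2prop] at hRf ⊢
      refine d2prop_component f i ?_ ?_ ?_ hRf
      · exact fun x _ => Set.mem_univ _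
      · rintro _ ⟨b, rfl⟩
        exact ⟨Pi.single i b, piF_single f i b⟩
      · exact Set.mem_univ _
  · intro h
    constructor
    · rw [leftD2_iff_d2prop]
      refine d2prop_pi f (SL' := fun i => Set.range (f i)) (SR' := fun _ => Set.univ)
        ?_ ?_ ?_
      · rintro _ ⟨b, rfl⟩ i
        exact ⟨b i, rfl⟩
      · exact fun a _ i => Set.mem_univ _
      · intro i
        rw [← leftD2_iff_d2prop]
        exact (h i).1
    · rw [rightD2_iff_d2prop]
      refine d2prop_pi f (SL' := fun _ => Set.univ) (SR' := fun i => Set.range (f i))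
        ?_ ?_ ?_
      · exact fun a _ i => Set.mem_univ _
      · rintro _ ⟨b, rfl⟩ i
        exact ⟨b i, rfl⟩
      · intro i
        rw [← rightD2_iff_d2prop]
        exact (h i).2

end
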